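/- Let n ≥ 2 and m ≥ 1 be integers. The stable translation quiver (Γ^m_{A_{n−1}}, τ_m) is connected: for any two m-diagonals D and D′ of the regular (nm+2)-gon, there is a finite sequence D = D_0, D_1, …, D_k = D′ of m-diagonals such that for each s either there is an arrow between D_{s−1} and D_s (in one direction or the other) in Γ^m_{A_{n−1}}, or D_s = τ_m(D_{s−1}), or D_{s−1} = τ_m(D_s). In particular Γ^m_{A_{n−1}} is not a disjoint union of two non-empty stable subquivers. -/
import Mathlib


/-- An `m`-diagonal of the regular `(n*m+2)`-gon, with vertices labelled by
`ZMod (n*m+2)`: an unordered pair of the form `{i, i+k*m+1}` with `1 ≤ k ≤ n-1`. -/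
def IsMDiagonal (n m : ℕ) (p : Sym2 (ZMod (n*m+2))) : Prop :=
  ∃ (i : ZMod (n*m+2)) (k : ℕ), 1 ≤ k ∧ k ≤ n - 1 ∧
    p = s(i, i + ((k*m+1 : ℕ) : ZMod (n*m+2)))

/-- The translation `τ_m`, sending `{i,j}` to `{i-m, j-m}`. -/
def tauM (n m : ℕ) : Sym2 (ZMod (n*m+2)) → Sym2 (ZMod (n*m+2)) :=
  Sym2.map (fun x => x - (m : ZMod (n*m+2)))

/-- There is an arrow `D → D'` in `Γ^m_{A_{n-1}}`: both `D` and `D'` are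
`m`-diagonals, and `D'` is obtained from `D = {a,b}` by replacing the
endpoint `b` by `b+m`. -/
def HasArrow (n m : ℕ) (D D' : Sym2 (ZMod (n*m+2))) : Prop :=
  IsMDiagonal n m D ∧ IsMDiagonal n m D' ∧
    ∃ a b : ZMod (n*m+2), D = s(a, b) ∧ D' = s(a, b + (m : ZMod (n*m+2)))

/-- One step in the stable translation quiver `(Γ^m_{A_{n-1}}, τ_m)`:
`X` and `Y` are `m`-diagonals and either there is an arrow between them (in one
direction or the other), or they are related by the translation `τ_m`
(in one direction or the other). -/
def QuiverStep (n m : ℕ) (X Y : Sym2 (ZMod (n*m+2))) : Prop :=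
  IsMDiagonal n m X ∧ IsMDiagonal n m Y ∧
    (HasArrow n m X Y ∨ HasArrow n m Y X ∨ Y = tauM n m X ∨ X = tauM n m Y)

namespace AuxConn

/-- The standard representation of an `m`-diagonal. -/
def dg (n m : ℕ) (i : ZMod (n*m+2)) (k : ℕ) : Sym2 (ZMod (n*m+2)) :=
  s(i, i + ((k*m+1 : ℕ) : ZMod (n*m+2)))

lemma dg_mdiag (n m : ℕ) (i : ZMod (n*m+2)) {k : ℕ} (h1 : 1 ≤ k) (h2 : k ≤ n-1) :
    IsMDiagonal n m (dg n m i k) := ⟨i, k, h1, h2, rfl⟩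

lemma tau_dg (n m : ℕ) (i : ZMod (n*m+2)) (k : ℕ) :
    tauM n m (dg n m i k) = dg n m (i - (m : ZMod (n*m+2))) k := by
  simp only [tauM, dg, Sym2.map_pair_eq]
  rw [Sym2.eq_iff]
  exact Or.inl ⟨rfl, by ring⟩

lemma step_tau (n m : ℕ) {k : ℕ} (h1 : 1 ≤ k) (h2 : k ≤ n-1) (i : ZMod (n*m+2)) :
    QuiverStep n m (dg n m i k) (dg n m (i - (m : ZMod (n*m+2))) k) :=
  ⟨dg_mdiag n m i h1 h2, dg_mdiag n m _ h1 h2,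
    Or.inr (Or.inr (Or.inl (tau_dg n m i k).symm))⟩

lemma step_arrow (n m : ℕ) {k : ℕ} (h1 : 1 ≤ k) (h2 : k+1 ≤ n-1) (i : ZMod (n*m+2)) :
    QuiverStep n m (dg n m i k) (dg n m i (k+1)) := by
  have hk2 : k ≤ n - 1 := le_trans (Nat.le_succ k) h2
  have hD : IsMDiagonal n m (dg n m i k) := dg_mdiag n m i h1 hk2
  have hD' : IsMDiagonal n m (dg n m i (k+1)) := dg_mdiag n m i (by omega) h2
  refine ⟨hD, hD', Or.inl ⟨hD, hD', i, i + ((k*m+1 : ℕ) : ZMod (n*m+2)), rfl, ?_⟩⟩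
  unfold dg
  rw [Sym2.eq_iff]
  refine Or.inl ⟨rfl, ?_⟩
  push_cast
  ring

lemma dg_flip (n m : ℕ) {k : ℕ} (hk : k ≤ n) (i : ZMod (n*m+2)) :
    dg n m i k = dg n m (i + ((k*m+1 : ℕ) : ZMod (n*m+2))) (n-k) := by
  have hle : k*m ≤ n*m := Nat.mul_le_mul_right m hk
  have hsub : (n-k)*m = n*m - k*m := Nat.sub_mul n k m
  have hnat : (k*m+1) + ((n-k)*m+1) = n*m+2 := by omega
  have hzero : ((k*m+1 : ℕ) : ZMod (n*m+2)) + (((n-k)*m+1 : ℕ) : ZMod (n*m+2)) = 0 := by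
    rw [← Nat.cast_add, hnat]
    exact ZMod.natCast_self _
  unfold dg
  conv_rhs => rw [Sym2.eq_swap]
  rw [Sym2.eq_iff]
  refine Or.inl ⟨?_, rfl⟩
  rw [add_assoc, hzero, add_zero]

lemma path_up (n m : ℕ) (i : ZMod (n*m+2)) :
    ∀ k, 1 ≤ k → k ≤ n-1 →
      Relation.ReflTransGen (QuiverStep n m) (dg n m i 1) (dg n m i k)
  | 0, h, _ => absurd h (by omega)
  | 1, _, _ => .refl
  | (k+2), _, h2 =>
      .tail (path_up n m i (k+1) (by omega) (by omega))
        (step_arrow n m (by omega) h2 i)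

lemma qs_symm (n m : ℕ) {X Y : Sym2 (ZMod (n*m+2))} (h : QuiverStep n m X Y) :
    QuiverStep n m Y X := by
  obtain ⟨h1, h2, h3⟩ := h
  exact ⟨h2, h1, by tauto⟩

lemma r_symm (n m : ℕ) {X Y : Sym2 (ZMod (n*m+2))}
    (h : Relation.ReflTransGen (QuiverStep n m) X Y) :
    Relation.ReflTransGen (QuiverStep n m) Y X := by
  induction h with
  | refl => exact .refl
  | tail _ hstep ih => exact Relation.ReflTransGen.head (qs_symm n m hstep) ih

lemma shift1 (n m : ℕ) (hn : 2 ≤ n) (i : ZMod (n*m+2)) :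
    Relation.ReflTransGen (QuiverStep n m) (dg n m i 1) (dg n m (i+1) 1) := by
  rw [dg_flip n m (show 1 ≤ n by omega) i]
  set j := i + ((1*m+1 : ℕ) : ZMod (n*m+2)) with hj
  have h1 : Relation.ReflTransGen (QuiverStep n m) (dg n m j (n-1)) (dg n m j 1) :=
    r_symm n m (path_up n m j (n-1) (by omega) le_rfl)
  have h2 : QuiverStep n m (dg n m j 1) (dg n m (j - (m : ZMod (n*m+2))) 1) :=
    step_tau n m le_rfl (by omega) j
  have hji : j - (m : ZMod (n*m+2)) = i + 1 := by
    rw [hj]; push_cast; ring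
  rw [hji] at h2
  exact h1.tail h2

lemma shiftc (n m : ℕ) (hn : 2 ≤ n) (i : ZMod (n*m+2)) (c : ℕ) :
    Relation.ReflTransGen (QuiverStep n m)
      (dg n m i 1) (dg n m (i + (c : ZMod (n*m+2))) 1) := by
  induction c with
  | zero => simpa using (Relation.ReflTransGen.refl :
      Relation.ReflTransGen (QuiverStep n m) (dg n m i 1) (dg n m i 1))
  | succ c ih =>
      have h := ih.trans (shift1 n m hn (i + (c : ZMod (n*m+2))))
      have he : i + ((c+1 : ℕ) : ZMod (n*m+2)) = i + (c : ZMod (n*m+2)) + 1 := by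
        push_cast; ring
      rw [he]
      exact h

end AuxConn

/-- `(Γ^m_{A_{n-1}}, τ_m)` is connected: any two `m`-diagonals are joined by a
finite sequence of `m`-diagonals in which each consecutive pair is related by
an arrow (in one direction or the other) or by the translation `τ_m` (in one
direction or the other).  In particular, `Γ^m_{A_{n-1}}` is not a disjoint
union of two non-empty stable subquivers. -/
theorem stmt2 (n m : ℕ) (hn : 2 ≤ n) (hm : 1 ≤ m)
    (D D' : Sym2 (ZMod (n*m+2))) (hD : IsMDiagonal n m D) (hD' : IsMDiagonal n m D') :
    Relation.ReflTransGen (QuiverStep n m) D D' := by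
  obtain ⟨i, k, hk1, hk2, rfl⟩ := hD
  obtain ⟨i', k', hk1', hk2', rfl⟩ := hD'
  haveI : NeZero (n*m+2) := ⟨by omega⟩
  show Relation.ReflTransGen (QuiverStep n m) (AuxConn.dg n m i k) (AuxConn.dg n m i' k')
  have ha : Relation.ReflTransGen (QuiverStep n m) (AuxConn.dg n m i k) (AuxConn.dg n m i 1) :=
    AuxConn.r_symm n m (AuxConn.path_up n m i k hk1 hk2)
  have hb := AuxConn.shiftc n m hn i (i' - i).val
  have hc : i + (((i' - i).val : ℕ) : ZMod (n*m+2)) = i' := by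
    rw [ZMod.natCast_rightInverse (i' - i)]
    ring
  rw [hc] at hb
  exact (ha.trans hb).trans (AuxConn.path_up n m i' k' hk1' hk2')
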